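/- For any two well-founded extensional APGs X and Y with carriers in Type u, there exists a well-founded extensional APG Z with carrier in Type u such that for every well-founded extensional APG W with carrier in Type u, W ⋲ Z holds if and only if W is isomorphic (as an APG) to X or W is isomorphic to Y. (The pairing axiom holds in the class of well-founded extensional APGs.) -/

import Mathlib

universe u

/-- An accessible pointed graph (APG): a type with a binary relation and a root from
which every node is reachable (backwards along `Relation.ReflTransGen`). -/
structure APG : Type (u + 1) where
  carrier : Type u
  rel : carrier → carrier → Prop
  pt : carrier
  acc : ∀ z : carrier, Relation.ReflTransGen rel z pt

/-- An APG is well-founded if its relation is. -/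
def APG.WF (X : APG.{u}) : Prop := WellFounded X.rel

/-- An APG is extensional if its relation is. -/
def APG.Ext (X : APG.{u}) : Prop :=
  ∀ x y : X.carrier, (∀ z, X.rel z x ↔ X.rel z y) → x = y

/-- Isomorphism of APGs: a relation isomorphism preserving the root. -/
def APG.Iso (X Y : APG.{u}) : Prop :=
  ∃ e : X.rel ≃r Y.rel, e X.pt = Y.pt

private theorem APG.slice_acc {α : Type u} (r : α → α → Prop) (y : α)
    (z : {w : α // Relation.ReflTransGen r w y}) :
    Relation.ReflTransGen (fun a b : {w : α // Relation.ReflTransGen r w y} => r a.1 b.1)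
      z ⟨y, Relation.ReflTransGen.refl⟩ := by
  obtain ⟨a, h⟩ := z
  induction h using Relation.ReflTransGen.head_induction_on with
  | refl => exact Relation.ReflTransGen.refl
  | head h' h ih => exact Relation.ReflTransGen.head h' ih

/-- The sub-APG of `Y` determined by a node `y`: the nodes admitting a path to `y`,
rooted at `y`. -/
def APG.slice (Y : APG.{u}) (y : Y.carrier) : APG.{u} where
  carrier := {z : Y.carrier // Relation.ReflTransGen Y.rel z y}
  rel a b := Y.rel a.1 b.1
  pt := ⟨y, Relation.ReflTransGen.refl⟩
  acc z := APG.slice_acc Y.rel y z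

/-- Membership of APGs: `X ⋲ Y` iff `X` is isomorphic to `Y.slice y` for some member
(child of the root) `y` of `Y`. -/
def APG.Mem (X Y : APG.{u}) : Prop :=
  ∃ y : Y.carrier, Y.rel y Y.pt ∧ APG.Iso X (Y.slice y)

namespace APGPairing

open Relation Sum
open scoped Classical

theorem iso_symm {X Y : APG.{u}} (h : APG.Iso X Y) : APG.Iso Y X := by
  obtain ⟨e, he⟩ := h
  exact ⟨e.symm, by rw [← he]; exact e.symm_apply_apply _⟩

theorem iso_trans {X Y Z : APG.{u}} (h1 : APG.Iso X Y) (h2 : APG.Iso Y Z) : APG.Iso X Z := by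
  obtain ⟨e, he⟩ := h1
  obtain ⟨e', he'⟩ := h2
  exact ⟨e.trans e', by show e' (e X.pt) = Z.pt; rw [he, he']⟩

variable {X Y : APG.{u}}

def Bisim (hXw : X.WF) : X.carrier → Y.carrier → Prop :=
  WellFounded.fix hXw fun a ih b =>
    (∀ a' (h : X.rel a' a), ∃ b', Y.rel b' b ∧ ih a' h b') ∧
    (∀ b', Y.rel b' b → ∃ a', ∃ h : X.rel a' a, ih a' h b')

theorem bisim_iff (hXw : X.WF) (a : X.carrier) (b : Y.carrier) :
    Bisim hXw a b ↔
      (∀ a', X.rel a' a → ∃ b', Y.rel b' b ∧ Bisim hXw a' b') ∧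
      (∀ b', Y.rel b' b → ∃ a', X.rel a' a ∧ Bisim hXw a' b') := by
  have h := congrFun (WellFounded.fix_eq hXw
    (fun (a : X.carrier) (ih : ∀ a', X.rel a' a → Y.carrier → Prop) (b : Y.carrier) =>
    (∀ a' (h : X.rel a' a), ∃ b', Y.rel b' b ∧ ih a' h b') ∧
    (∀ b', Y.rel b' b → ∃ a', ∃ h : X.rel a' a, ih a' h b')) a) b
  rw [Bisim, h]
  constructor
  · rintro ⟨h1, h2⟩
    exact ⟨fun a' ha => h1 a' ha, fun b' hb => by
      obtain ⟨a', ha, hB⟩ := h2 b' hb; exact ⟨a', ha, hB⟩⟩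
  · rintro ⟨h1, h2⟩
    exact ⟨fun a' ha => h1 a' ha, fun b' hb => by
      obtain ⟨a', ha, hB⟩ := h2 b' hb; exact ⟨a', ha, hB⟩⟩

theorem Bisim.left {hXw : X.WF} {a b} (h : Bisim hXw a b) :
    ∀ a', X.rel a' a → ∃ b', Y.rel b' b ∧ Bisim hXw a' b' :=
  ((bisim_iff hXw a b).mp h).1

theorem Bisim.right {hXw : X.WF} {a b} (h : Bisim hXw a b) :
    ∀ b', Y.rel b' b → ∃ a', X.rel a' a ∧ Bisim hXw a' b' :=
  ((bisim_iff hXw a b).mp h).2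

theorem Bisim.mk {hXw : X.WF} {a : X.carrier} {b : Y.carrier}
    (h1 : ∀ a', X.rel a' a → ∃ b', Y.rel b' b ∧ Bisim hXw a' b')
    (h2 : ∀ b', Y.rel b' b → ∃ a', X.rel a' a ∧ Bisim hXw a' b') : Bisim hXw a b :=
  (bisim_iff hXw a b).mpr ⟨h1, h2⟩

theorem bisim_funl {hXw : X.WF} (hXe : X.Ext) (a : X.carrier) :
    ∀ (b : Y.carrier) a', Bisim hXw a b → Bisim hXw a' b → a = a' := by
  refine hXw.induction
    (C := fun a => ∀ (b : Y.carrier) a', Bisim hXw a b → Bisim hXw a' b → a = a') a ?_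
  intro a ih b a' hab ha'b
  apply hXe
  intro z
  constructor
  · intro hz
    obtain ⟨b', hb', hzb'⟩ := hab.left z hz
    obtain ⟨a'', ha'', ha''b'⟩ := ha'b.right b' hb'
    rwa [ih z hz b' a'' hzb' ha''b']
  · intro hz
    obtain ⟨b', hb', hzb'⟩ := ha'b.left z hz
    obtain ⟨a'', ha'', ha''b'⟩ := hab.right b' hb'
    rwa [← ih a'' ha'' b' z ha''b' hzb']

theorem bisim_funr {hXw : X.WF} (hYw : Y.WF) (hYe : Y.Ext) (b : Y.carrier) :
    ∀ (a : X.carrier) b', Bisim hXw a b → Bisim hXw a b' → b = b' := by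
  refine hYw.induction
    (C := fun b => ∀ (a : X.carrier) b', Bisim hXw a b → Bisim hXw a b' → b = b') b ?_
  intro b ih a b' hab hab'
  apply hYe
  intro z
  constructor
  · intro hz
    obtain ⟨a'', ha'', ha''z⟩ := hab.right z hz
    obtain ⟨b'', hb'', ha''b''⟩ := hab'.left a'' ha''
    rwa [ih z hz a'' b'' ha''z ha''b'']
  · intro hz
    obtain ⟨a'', ha'', ha''z⟩ := hab'.right z hz
    obtain ⟨b'', hb'', hb''z⟩ := hab.left a'' ha''
    rwa [← ih b'' hb'' a'' z hb''z ha''z]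


variable (X Y) (hXw : X.WF)

abbrev Csum : Type u := X.carrier ⊕ {b : Y.carrier // ¬ ∃ a, Bisim hXw a b}

noncomputable def fY (b : Y.carrier) : Csum X Y hXw :=
  if h : ∃ a, Bisim hXw a b then Sum.inl h.choose else Sum.inr ⟨b, h⟩

def s : Csum X Y hXw → Csum X Y hXw → Prop
  | Sum.inl a', Sum.inl a => X.rel a' a
  | Sum.inl a', Sum.inr b => ∃ b', Y.rel b' b.1 ∧ Bisim hXw a' b'
  | Sum.inr _, Sum.inl _ => False
  | Sum.inr b', Sum.inr b => Y.rel b'.1 b.1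

noncomputable def s' : Option (Csum X Y hXw) → Option (Csum X Y hXw) → Prop
  | some u, some v => s X Y hXw u v
  | some u, none => u = Sum.inl X.pt ∨ u = fY X Y hXw Y.pt
  | none, _ => False

variable {X Y hXw}

theorem f_eq_inl (hXe : X.Ext) {a b} (hab : Bisim hXw a b) :
    fY X Y hXw b = Sum.inl a := by
  have h : ∃ a, Bisim hXw a b := ⟨a, hab⟩
  rw [fY, dif_pos h]
  exact congrArg Sum.inl (bisim_funl hXe h.choose b a h.choose_spec hab)

theorem f_eq_inr {b} (h : ¬ ∃ a, Bisim hXw a b) :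
    fY X Y hXw b = Sum.inr ⟨b, h⟩ := dif_neg h

theorem bisim_of_f_eq_inl {a b} (h : fY X Y hXw b = Sum.inl a) : Bisim hXw a b := by
  by_cases hb : ∃ a, Bisim hXw a b
  · rw [fY, dif_pos hb] at h
    injection h with h
    rw [← h]
    exact hb.choose_spec
  · rw [fY, dif_neg hb] at h
    exact absurd h (by simp)

theorem f_inj (hYw : Y.WF) (hYe : Y.Ext) {b1 b2 : Y.carrier}
    (h : fY X Y hXw b1 = fY X Y hXw b2) : b1 = b2 := by
  by_cases h1 : ∃ a, Bisim hXw a b1 <;> by_cases h2 : ∃ a, Bisim hXw a b2 <;>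
    rw [fY, fY] at h
  · rw [dif_pos h1, dif_pos h2] at h
    injection h with h
    exact bisim_funr hYw hYe b1 h1.choose b2 h1.choose_spec (h ▸ h2.choose_spec)
  · rw [dif_pos h1, dif_neg h2] at h; exact absurd h (by simp)
  · rw [dif_neg h1, dif_pos h2] at h; exact absurd h (by simp)
  · rw [dif_neg h1, dif_neg h2] at h
    injection h with h
    exact congrArg Subtype.val h

theorem fY_hom (hXe : X.Ext) {b' b : Y.carrier} (hrel : Y.rel b' b) :
    s X Y hXw (fY X Y hXw b') (fY X Y hXw b) := by
  by_cases hb : ∃ a, Bisim hXw a b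
  · obtain ⟨a', ha', ha'b'⟩ := hb.choose_spec.right b' hrel
    rw [f_eq_inl hXe hb.choose_spec, f_eq_inl hXe ha'b']
    exact ha'
  · rw [f_eq_inr hb]
    by_cases hb' : ∃ a, Bisim hXw a b'
    · rw [f_eq_inl hXe hb'.choose_spec]
      exact ⟨b', hrel, hb'.choose_spec⟩
    · rw [f_eq_inr hb']
      exact hrel

theorem char_inl {u : Csum X Y hXw} {a : X.carrier} :
    s X Y hXw u (Sum.inl a) ↔ ∃ a', X.rel a' a ∧ u = Sum.inl a' := by
  cases u with
  | inl a' =>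
    simp only [s]
    constructor
    · exact fun h => ⟨a', h, rfl⟩
    · rintro ⟨a'', h, heq⟩; injection heq with heq; rwa [heq]
  | inr b' =>
    simp only [s]
    constructor
    · exact fun h => h.elim
    · rintro ⟨a'', h, heq⟩; exact absurd heq (by simp)

theorem char_f (hXe : X.Ext) {u : Csum X Y hXw} {b : Y.carrier} :
    s X Y hXw u (fY X Y hXw b) ↔ ∃ b', Y.rel b' b ∧ u = fY X Y hXw b' := by
  constructor
  · intro h
    by_cases hb : ∃ a, Bisim hXw a b
    · rw [f_eq_inl hXe hb.choose_spec] at h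
      obtain ⟨a', ha', rfl⟩ := char_inl.mp h
      obtain ⟨b', hb', ha'b'⟩ := hb.choose_spec.left a' ha'
      exact ⟨b', hb', (f_eq_inl hXe ha'b').symm⟩
    · rw [f_eq_inr hb] at h
      cases u with
      | inl a' =>
        obtain ⟨b', hb', ha'b'⟩ := h
        exact ⟨b', hb', (f_eq_inl hXe ha'b').symm⟩
      | inr b₂ =>
        exact ⟨b₂.1, h, (f_eq_inr b₂.2).symm⟩
  · rintro ⟨b', hb', rfl⟩
    exact fY_hom hXe hb'


theorem acc_inl (a : X.carrier) : Acc (s X Y hXw) (Sum.inl a) := by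
  refine hXw.induction (C := fun a => Acc (s X Y hXw) (Sum.inl a)) a ?_
  intro a ih
  constructor
  intro u hu
  obtain ⟨a', ha', rfl⟩ := char_inl.mp hu
  exact ih a' ha'

theorem wf_s (hYw : Y.WF) : WellFounded (s X Y hXw) := by
  constructor
  intro c
  cases c with
  | inl a => exact acc_inl a
  | inr b =>
    obtain ⟨b, hb⟩ := b
    revert hb
    refine hYw.induction
      (C := fun b => ∀ hb : ¬ ∃ a, Bisim hXw a b, Acc (s X Y hXw) (Sum.inr ⟨b, hb⟩)) b ?_
    intro b ih hb
    constructor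
    intro u hu
    cases u with
    | inl a => exact acc_inl a
    | inr b₂ =>
      obtain ⟨b₂, hb₂⟩ := b₂
      exact ih b₂ hu hb₂

theorem acc_some {u : Csum X Y hXw} (h : Acc (s X Y hXw) u) :
    Acc (s' X Y hXw) (some u) := by
  induction h with
  | intro u _ ih =>
    constructor
    intro v hv
    cases v with
    | none => exact hv.elim
    | some w => exact ih w hv

theorem wf_s' (hYw : Y.WF) : WellFounded (s' X Y hXw) := by
  constructor
  intro z
  cases z with
  | some u => exact acc_some ((wf_s hYw).apply u)
  | none =>
    constructor
    intro v hv
    cases v with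
    | none => exact hv.elim
    | some w => exact acc_some ((wf_s hYw).apply w)

/-- Reachability to root. -/
theorem acc_Z (hXe : X.Ext) (z : Option (Csum X Y hXw)) :
    ReflTransGen (s' X Y hXw) z none := by
  cases z with
  | none => exact ReflTransGen.refl
  | some u =>
    have step : ∀ {w : Csum X Y hXw}, (w = Sum.inl X.pt ∨ w = fY X Y hXw Y.pt) →
        ReflTransGen (s' X Y hXw) (some w) none := by
      intro w hw
      exact ReflTransGen.single hw
    cases u with
    | inl a =>
      have h1 : ReflTransGen (s' X Y hXw) (some (Sum.inl a)) (some (Sum.inl X.pt)) :=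
        ReflTransGen.lift (p := s' X Y hXw) (fun a => some (Sum.inl a)) (fun _ _ h => h) _ _ (X.acc a)
      exact h1.trans (step (Or.inl rfl))
    | inr b =>
      have h0 : (Sum.inr b : Csum X Y hXw) = fY X Y hXw b.1 := (f_eq_inr b.2).symm
      have h1 : ReflTransGen (s' X Y hXw) (some (fY X Y hXw b.1)) (some (fY X Y hXw Y.pt)) :=
        ReflTransGen.lift (fun b => some (fY X Y hXw b)) (p := s' X Y hXw) (fun _ _ h => fY_hom hXe h) _ _ (Y.acc b.1)
      rw [h0]
      exact h1.trans (step (Or.inr rfl))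

theorem reach_some {z : Option (Csum X Y hXw)} {u : Csum X Y hXw}
    (h : ReflTransGen (s' X Y hXw) z (some u)) :
    ∃ w, z = some w ∧ ReflTransGen (s X Y hXw) w u := by
  induction h using ReflTransGen.head_induction_on with
  | refl => exact ⟨u, rfl, ReflTransGen.refl⟩
  | head h' h ih =>
    obtain ⟨w', hc, hpath⟩ := ih
    subst hc
    rename_i z'
    cases z' with
    | none => exact h'.elim
    | some w₂ => exact ⟨w₂, rfl, hpath.head h'⟩

theorem reach_inl {w : Csum X Y hXw} {x : X.carrier}
    (h : ReflTransGen (s X Y hXw) w (Sum.inl x)) : ∃ a, w = Sum.inl a := by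
  induction h using ReflTransGen.head_induction_on with
  | refl => exact ⟨x, rfl⟩
  | head h' h ih =>
    obtain ⟨a₁, rfl⟩ := ih
    obtain ⟨a₂, _, rfl⟩ := char_inl.mp h'
    exact ⟨a₂, rfl⟩

theorem reach_f (hXe : X.Ext) {w : Csum X Y hXw} {b : Y.carrier}
    (h : ReflTransGen (s X Y hXw) w (fY X Y hXw b)) : ∃ b₀, w = fY X Y hXw b₀ := by
  induction h using ReflTransGen.head_induction_on with
  | refl => exact ⟨b, rfl⟩
  | head h' h ih =>
    obtain ⟨b₁, rfl⟩ := ih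
    obtain ⟨b₂, _, rfl⟩ := (char_f hXe).mp h'
    exact ⟨b₂, rfl⟩


theorem bisim_of_children (hXe : X.Ext) {a : X.carrier}
    {b : {b : Y.carrier // ¬ ∃ a, Bisim hXw a b}}
    (h : ∀ w, s X Y hXw w (Sum.inl a) ↔ s X Y hXw w (Sum.inr b)) : Bisim hXw a b.1 := by
  have hfb : (Sum.inr b : Csum X Y hXw) = fY X Y hXw b.1 := by
    rw [f_eq_inr b.2]
  refine Bisim.mk ?_ ?_
  · intro a' ha'
    have h1 : s X Y hXw (Sum.inl a') (Sum.inr b) := (h _).mp ha'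
    rw [hfb] at h1
    obtain ⟨b', hb', heq⟩ := (char_f hXe).mp h1
    exact ⟨b', hb', bisim_of_f_eq_inl heq.symm⟩
  · intro b' hb'
    have h1 : s X Y hXw (fY X Y hXw b') (fY X Y hXw b.1) := fY_hom hXe hb'
    rw [← hfb] at h1
    obtain ⟨a', ha', heq⟩ := char_inl.mp ((h _).mpr h1)
    exact ⟨a', ha', bisim_of_f_eq_inl heq⟩

theorem ext_s (hXe : X.Ext) (hYw : Y.WF) (hYe : Y.Ext) (u v : Csum X Y hXw)
    (h : ∀ w, s X Y hXw w u ↔ s X Y hXw w v) : u = v := by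
  cases u with
  | inl a1 =>
    cases v with
    | inl a2 =>
      exact congrArg Sum.inl (hXe a1 a2 (fun z => h (Sum.inl z)))
    | inr b2 =>
      exact absurd ⟨a1, bisim_of_children hXe h⟩ b2.2
  | inr b1 =>
    cases v with
    | inl a2 =>
      exact absurd ⟨a2, bisim_of_children hXe (fun w => (h w).symm)⟩ b1.2
    | inr b2 =>
      have hfb1 : (Sum.inr b1 : Csum X Y hXw) = fY X Y hXw b1.1 := by rw [f_eq_inr b1.2]
      have hfb2 : (Sum.inr b2 : Csum X Y hXw) = fY X Y hXw b2.1 := by rw [f_eq_inr b2.2]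
      have : b1.1 = b2.1 := by
        apply hYe
        intro z
        constructor
        · intro hz
          have h1 : s X Y hXw (fY X Y hXw z) (fY X Y hXw b1.1) := fY_hom hXe hz
          rw [← hfb1] at h1
          have h2 := (h _).mp h1
          rw [hfb2] at h2
          obtain ⟨b₃, hb₃, heq⟩ := (char_f hXe).mp h2
          rwa [f_inj hYw hYe heq]
        · intro hz
          have h1 : s X Y hXw (fY X Y hXw z) (fY X Y hXw b2.1) := fY_hom hXe hz
          rw [← hfb2] at h1
          have h2 := (h _).mpr h1
          rw [hfb1] at h2
          obtain ⟨b₃, hb₃, heq⟩ := (char_f hXe).mp h2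
          rwa [f_inj hYw hYe heq]
      exact congrArg Sum.inr (Subtype.ext this)

theorem root_unique (hXe : X.Ext) (hYw : Y.WF) (c : Csum X Y hXw)
    (h : ∀ w, s' X Y hXw w (some c) ↔ s' X Y hXw w none) : False := by
  have h1 : s X Y hXw (Sum.inl X.pt) c := (h (some (Sum.inl X.pt))).mpr (Or.inl rfl)
  have h2 : s X Y hXw (fY X Y hXw Y.pt) c := (h (some (fY X Y hXw Y.pt))).mpr (Or.inr rfl)
  rcases (acc_Z hXe (some c)).cases_tail with heq | ⟨w, hp, hw⟩
  · exact (Option.some_ne_none c heq.symm).elim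
  · cases w with
    | none => exact hw.elim
    | some d =>
      obtain ⟨w', hww, hpath⟩ := reach_some hp
      injection hww with hww
      subst hww
      have hd : d = Sum.inl X.pt ∨ d = fY X Y hXw Y.pt := hw
      rcases hd with rfl | rfl
      · have cyc := TransGen.head' h1 hpath
        exact (wf_s hYw).transGen.asymmetric _ _ cyc cyc
      · have cyc := TransGen.head' h2 hpath
        exact (wf_s hYw).transGen.asymmetric _ _ cyc cyc

theorem ext_Z (hXe : X.Ext) (hYw : Y.WF) (hYe : Y.Ext)
    (x y : Option (Csum X Y hXw)) (h : ∀ z, s' X Y hXw z x ↔ s' X Y hXw z y) : x = y := by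
  cases x with
  | none =>
    cases y with
    | none => rfl
    | some c => exact absurd (fun w => (h w).symm) (fun hh => root_unique hXe hYw c hh)
  | some u =>
    cases y with
    | none => exact absurd h (fun hh => root_unique hXe hYw u hh)
    | some v =>
      exact congrArg some (ext_s hXe hYw hYe u v (fun w => h (some w)))

variable (X Y hXw)

noncomputable def Zap (hXe : X.Ext) : APG.{u} where
  carrier := Option (Csum X Y hXw)
  rel := s' X Y hXw
  pt := none
  acc := acc_Z hXe

variable {X Y hXw}

theorem iso_sliceX (hXe : X.Ext) :
    APG.Iso X ((Zap X Y hXw hXe).slice (some (Sum.inl X.pt))) := by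
  have g : ∀ a : X.carrier,
      ReflTransGen (s' X Y hXw) (some (Sum.inl a)) (some (Sum.inl X.pt)) :=
    fun a => ReflTransGen.lift (p := s' X Y hXw) (fun a => some (Sum.inl a)) (fun _ _ h => h) _ _ (X.acc a)
  refine ⟨RelIso.mk (Equiv.ofBijective (fun a => ⟨some (Sum.inl a), g a⟩) ⟨?_, ?_⟩)
    (fun {a b} => Iff.rfl), Subtype.ext rfl⟩
  · intro a b hab
    have h2 := congrArg Subtype.val hab
    injection h2 with h3
    injection h3
  · rintro ⟨z, hz⟩
    obtain ⟨w, rfl, hw⟩ := reach_some hz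
    obtain ⟨a, rfl⟩ := reach_inl hw
    exact ⟨a, Subtype.ext rfl⟩

theorem iso_sliceY (hXe : X.Ext) (hYw : Y.WF) (hYe : Y.Ext) :
    APG.Iso Y ((Zap X Y hXw hXe).slice (some (fY X Y hXw Y.pt))) := by
  have g : ∀ b : Y.carrier,
      ReflTransGen (s' X Y hXw) (some (fY X Y hXw b)) (some (fY X Y hXw Y.pt)) :=
    fun b => ReflTransGen.lift (fun b => some (fY X Y hXw b))
      (p := s' X Y hXw) (fun _ _ h => fY_hom hXe h) _ _ (Y.acc b)
  refine ⟨RelIso.mk (Equiv.ofBijective (fun b => ⟨some (fY X Y hXw b), g b⟩) ⟨?_, ?_⟩)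
    ?_, Subtype.ext rfl⟩
  · intro a b hab
    have h2 := congrArg Subtype.val hab
    injection h2 with h3
    exact f_inj hYw hYe h3
  · rintro ⟨z, hz⟩
    obtain ⟨w, rfl, hw⟩ := reach_some hz
    obtain ⟨b, rfl⟩ := reach_f hXe hw
    exact ⟨b, Subtype.ext rfl⟩
  · intro a b
    show s X Y hXw (fY X Y hXw a) (fY X Y hXw b) ↔ Y.rel a b
    constructor
    · intro h
      obtain ⟨b₃, hb₃, heq⟩ := (char_f hXe).mp h
      rwa [f_inj hYw hYe heq]
    · exact fun h => fY_hom hXe h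

end APGPairing

/-- Pairing for well-founded extensional APGs. -/
theorem apg_pairing (X Y : APG.{u}) (hXw : X.WF) (hXe : X.Ext)
    (hYw : Y.WF) (hYe : Y.Ext) :
    ∃ Z : APG.{u}, Z.WF ∧ Z.Ext ∧
      ∀ W : APG.{u}, W.WF → W.Ext → (APG.Mem W Z ↔ APG.Iso W X ∨ APG.Iso W Y) := by
  classical
  refine ⟨APGPairing.Zap X Y hXw hXe, APGPairing.wf_s' hYw,
    fun x y h => APGPairing.ext_Z hXe hYw hYe x y h, ?_⟩
  intro W hWw hWe
  constructor
  · rintro ⟨y, hy, hiso⟩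
    cases y with
    | none => exact ((hy : False)).elim
    | some u =>
      have hy' : u = Sum.inl X.pt ∨ u = APGPairing.fY X Y hXw Y.pt := hy
      rcases hy' with rfl | rfl
      · exact Or.inl (APGPairing.iso_trans hiso
          (APGPairing.iso_symm (APGPairing.iso_sliceX hXe)))
      · exact Or.inr (APGPairing.iso_trans hiso
          (APGPairing.iso_symm (APGPairing.iso_sliceY hXe hYw hYe)))
  · rintro (h | h)
    · exact ⟨some (Sum.inl X.pt), Or.inl rfl,
        APGPairing.iso_trans h (APGPairing.iso_sliceX hXe)⟩
    · exact ⟨some (APGPairing.fY X Y hXw Y.pt), Or.inr rfl,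
        APGPairing.iso_trans h (APGPairing.iso_sliceY hXe hYw hYe)⟩
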